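/- arXiv:2012.09475 — 5 statements merged into one kernel-verified Lean document; each statement's English description precedes it below -/
import Mathlib

section
/- Every co-TT graph arises from the interval dependency relation: given functions a, b : V → ℝ, setting δ = max over v of max(a(v) - b(v), 0), ℓ_v = a(v), and r_v = b(v) + δ yields valid intervals (ℓ_v ≤ r_v) such that u and v are adjacent in the co-TT graph iff the intervals [ℓ_u, r_u] and [ℓ_v, r_v] are dependent with threshold δ. -/
theorem stmt_4 {V : Type*} [Fintype V] [Nonempty V] (a b : V → ℝ) :
    let δ := Finset.univ.sup' Finset.univ_nonempty (fun v => max (a v - b v) 0)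
    let ℓ := fun v => a v
    let r := fun v => b v + δ
    (∀ v : V, ℓ v ≤ r v) ∧
    (∀ u v : V, (a u < b v ∧ a v < b u) ↔ (r u - ℓ v > δ ∧ r v - ℓ u > δ)) := by
  intro δ ℓ r
  have hδ : ∀ v, a v - b v ≤ δ := fun v =>
    le_trans (le_max_left _ 0) (Finset.le_sup' (fun v => max (a v - b v) 0) (Finset.mem_univ v))
  constructor
  · intro v
    have := hδ v
    simp only [ℓ, r]
    linarith
  · intro u v
    simp only [ℓ, r]
    constructor
    · rintro ⟨h1, h2⟩; constructor <;> linarith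
    · rintro ⟨h1, h2⟩; constructor <;> linarith
end

section
/- A trivial interval is simplicial in the dependency graph: if I_k has width at most δ and is dependent on both I_i and I_j, then I_i and I_j are dependent on each other. -/
theorem stmt_7 (δ ℓi ri ℓj rj ℓk rk : ℝ) (hδ : 0 ≤ δ)
    (htriv : rk - ℓk ≤ δ)
    (hki : rk - ℓi > δ ∧ ri - ℓk > δ)
    (hkj : rk - ℓj > δ ∧ rj - ℓk > δ) :
    ri - ℓj > δ ∧ rj - ℓi > δ := by
  obtain ⟨h1, h2⟩ := hki
  obtain ⟨h3, h4⟩ := hkj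
  constructor <;> linarith
end

section
/- For all reals w_b > 0 and W ≥ 0 with W < 2·w_b, letting p = W/(2·w_b), we have p·w_b + (1 - p)·(W + (3/2)·w_b) ≤ (57/32)·w_b. -/
theorem stmt_11 (wb W : ℝ) (hb : 0 < wb) (hW : 0 ≤ W) (h : W < 2 * wb) :
    (W / (2 * wb)) * wb + (1 - W / (2 * wb)) * (W + (3 / 2) * wb) ≤ (57 / 32) * wb := by
  have h2 : (2 * wb) ≠ 0 := by positivity
  have key : W / (2 * wb) * (2 * wb) = W := div_mul_cancel₀ _ h2
  set p := W / (2 * wb) with hp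
  have hpw : p * (2 * wb) = W := key
  nlinarith [sq_nonneg (3 * wb - 4 * W), sq_nonneg p, mul_pos hb hb]
end

section
/- For all reals w_b > 0 and W ≥ 0 with W < √3·w_b, letting p = W/(√3·w_b), we have p·w_b + (1 - p)·(W + (1 + 1/√3)·w_b) ≤ (1 + 4/(3·√3))·w_b. -/
theorem stmt_12 (wb W : ℝ) (hb : 0 < wb) (hW : 0 ≤ W) (h : W < Real.sqrt 3 * wb) :
    (W / (Real.sqrt 3 * wb)) * wb
      + (1 - W / (Real.sqrt 3 * wb)) * (W + (1 + 1 / Real.sqrt 3) * wb)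
      ≤ (1 + 4 / (3 * Real.sqrt 3)) * wb := by
  have hs : Real.sqrt 3 ^ 2 = 3 := Real.sq_sqrt (by norm_num)
  have hsp : (0:ℝ) < Real.sqrt 3 := Real.sqrt_pos.mpr (by norm_num)
  have hd : Real.sqrt 3 * wb ≠ 0 := by positivity
  rw [← sub_nonneg]
  have key : (1 + 4 / (3 * Real.sqrt 3)) * wb - ((W / (Real.sqrt 3 * wb)) * wb
      + (1 - W / (Real.sqrt 3 * wb)) * (W + (1 + 1 / Real.sqrt 3) * wb))
      = (Real.sqrt 3 * W - wb)^2 / (3 * (Real.sqrt 3 * wb)) := by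
    field_simp
    linear_combination (-Real.sqrt 3*W^2 - wb*W) * hs
  rw [key]
  positivity
end

section
/- Define γ(α) = α²(2-α)²/(4(α-1)) + α for 1 < α < 2. Then γ attains its minimum on (1,2) at α = 1 + 1/√3, and the minimum value is 1 + 4/(3·√3). -/
theorem stmt_14 :
    let γ : ℝ → ℝ := fun α => α ^ 2 * (2 - α) ^ 2 / (4 * (α - 1)) + α
    (1 : ℝ) < 1 + 1 / Real.sqrt 3 ∧ 1 + 1 / Real.sqrt 3 < 2 ∧
    (∀ α : ℝ, 1 < α → α < 2 → γ (1 + 1 / Real.sqrt 3) ≤ γ α) ∧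
    γ (1 + 1 / Real.sqrt 3) = 1 + 4 / (3 * Real.sqrt 3) := by
  intro γ
  have hs : Real.sqrt 3 ^ 2 = 3 := Real.sq_sqrt (by norm_num)
  have hs1 : (1 : ℝ) < Real.sqrt 3 := by
    nlinarith [Real.sqrt_nonneg 3]
  have hspos : (0 : ℝ) < Real.sqrt 3 := by linarith
  set s := Real.sqrt 3 with hsdef
  have hu1 : 0 < 1 / s := by positivity
  have hu2 : 1 / s < 1 := by
    rw [div_lt_one hspos]; exact hs1
  have hval : γ (1 + 1 / s) = 1 + 4 / (3 * s) := by
    show (1 + 1 / s) ^ 2 * (2 - (1 + 1 / s)) ^ 2 / (4 * (1 + 1 / s - 1)) + (1 + 1 / s)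
        = 1 + 4 / (3 * s)
    have hsne : s ≠ 0 := ne_of_gt hspos
    field_simp
    ring_nf
    have h3 : s ^ 3 = 3 * s := by linear_combination s * hs
    have h5 : s ^ 5 = 9 * s := by linear_combination (s ^ 3 + 3 * s) * hs
    have h6 : s ^ 6 = 27 := by linear_combination (s ^ 4 + 3 * s ^ 2 + 9) * hs
    have h7 : s ^ 7 = 27 * s := by linear_combination (s ^ 5 + 3 * s ^ 3 + 9 * s) * hs
    have h4' : s ^ 4 = 9 := by linear_combination (s ^ 2 + 3) * hs
    linarith
  refine ⟨by linarith, by linarith, ?_, hval⟩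
  intro α h1 h2
  rw [hval]
  show 1 + 4 / (3 * s) ≤ α ^ 2 * (2 - α) ^ 2 / (4 * (α - 1)) + α
  have ht : 0 < α - 1 := by linarith
  rw [← sub_le_iff_le_add, le_div_iff₀ (by linarith : (0:ℝ) < 4 * (α - 1))]
  have h4 : 4 / (3 * s) = 4 * (1 / s) / 3 := by ring
  have hu3 : (1 / s) ^ 2 = 1 / 3 := by
    rw [div_pow, hs]; norm_num
  set u := 1 / s with hudef
  have key : (0 : ℝ) ≤ (α - 1 - u) ^ 2 * ((α - 1) ^ 2 + 2 * u * (α - 1) + 3) := by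
    have : (0 : ℝ) ≤ (α - 1) ^ 2 + 2 * u * (α - 1) + 3 := by nlinarith
    positivity
  nlinarith [key, hu3, hu1]
end
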